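/- Let L be a finite-dimensional normed space of dimension d with a symmetric basis f_1, …, f_d, meaning that ‖∑ c_i f_i‖ = ‖∑ δ_i c_{π(i)} f_i‖ for all coefficients c ∈ ℝ^d, all sign vectors δ ∈ {±1}^d, and all permutations π of {1,…,d}. Then the Banach–Mazur distance between L and ℓ₁^d satisfies d_BM(L, ℓ₁^d) ≤ d·‖f_1‖ / ‖f_1 + ⋯ + f_d‖. -/

import Mathlib

open scoped ENNReal NNReal

noncomputable def dBM (U V : Type*) [NormedAddCommGroup U] [NormedSpace ℝ U]
    [NormedAddCommGroup V] [NormedSpace ℝ V] : ℝ≥0∞ :=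
  ⨅ T : U ≃L[ℝ] V, (‖(T : U →L[ℝ] V)‖₊ : ℝ≥0∞) * (‖(T.symm : V →L[ℝ] U)‖₊ : ℝ≥0∞)

theorem stmt5 {L : Type*} [NormedAddCommGroup L] [NormedSpace ℝ L]
    (d : ℕ) (hd : 0 < d) (f : Module.Basis (Fin d) ℝ L)
    (hsym : ∀ (c : Fin d → ℝ) (δ : Fin d → ℝ), (∀ i, δ i = 1 ∨ δ i = -1) →
      ∀ π : Equiv.Perm (Fin d),
        ‖∑ i, c i • f i‖ = ‖∑ i, (δ i * c (π i)) • f i‖) :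
    dBM L (PiLp 1 fun _ : Fin d => ℝ) ≤
      ENNReal.ofReal ((d : ℝ) * ‖f ⟨0, hd⟩‖ / ‖∑ i, f i‖) := by
  classical
  haveI : NeZero d := ⟨hd.ne'⟩
  haveI : FiniteDimensional ℝ L := Module.Finite.of_basis f
  set i0 : Fin d := ⟨0, hd⟩ with hi0
  -- all basis vectors have the same norm
  have hnorm : ∀ i, ‖f i‖ = ‖f i0‖ := by
    intro i
    have h := hsym (Pi.single i (1:ℝ)) (fun _ => 1) (fun _ => Or.inl rfl)
      (Equiv.swap i i0)
    have h1 : ∑ j, (Pi.single i (1:ℝ) : Fin d → ℝ) j • f j = f i := by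
      simp only [Pi.single_apply, ite_smul, one_smul, zero_smul,
        Finset.sum_ite_eq', Finset.mem_univ, if_true]
    have h2 : ∑ j, ((1:ℝ) * (Pi.single i (1:ℝ) : Fin d → ℝ) (Equiv.swap i i0 j)) • f j = f i0 := by
      simp only [one_mul, Pi.single_apply, Equiv.apply_eq_iff_eq_symm_apply,
        Equiv.symm_swap, Equiv.swap_apply_left, ite_smul, one_smul, zero_smul,
        Finset.sum_ite_eq', Finset.mem_univ, if_true]
    rw [h1, h2] at h
    exact h
  -- sign removal
  have habs : ∀ c : Fin d → ℝ, ‖∑ i, c i • f i‖ = ‖∑ i, |c i| • f i‖ := by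
    intro c
    have h := hsym c (fun i => if 0 ≤ c i then 1 else -1)
      (fun i => by by_cases h : 0 ≤ c i <;> simp [h]) 1
    rw [h]
    congr 1
    apply Finset.sum_congr rfl
    intro i _
    congr 1
    by_cases hc : 0 ≤ c i
    · simp [hc, abs_of_nonneg hc]
    · simp [hc, abs_of_neg (lt_of_not_ge hc)]
  -- averaging over cyclic shifts
  have havg : ∀ c : Fin d → ℝ,
      |∑ i, c i| * ‖∑ i, f i‖ ≤ d * ‖∑ i, c i • f i‖ := by
    intro c
    have key : (∑ i, c i) • (∑ i, f i) = ∑ k : Fin d, ∑ i, c (i + k) • f i := by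
      rw [Finset.sum_comm]
      rw [Finset.smul_sum]
      apply Finset.sum_congr rfl
      intro i _
      rw [← Finset.sum_smul]
      congr 1
      exact (Fintype.sum_equiv (Equiv.addLeft i) _ _ (fun k => rfl)).symm
    have hle : ‖(∑ i, c i) • (∑ i, f i)‖ ≤ ∑ k : Fin d, ‖∑ i, c (i + k) • f i‖ := by
      rw [key]; exact norm_sum_le _ _
    have heach : ∀ k : Fin d, ‖∑ i, c (i + k) • f i‖ = ‖∑ i, c i • f i‖ := by
      intro k
      have h := hsym c (fun _ => 1) (fun _ => Or.inl rfl) (Equiv.addRight k)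
      rw [h]
      congr 1
      apply Finset.sum_congr rfl
      intro i _
      simp [Equiv.addRight]
    calc |∑ i, c i| * ‖∑ i, f i‖ = ‖(∑ i, c i) • (∑ i, f i)‖ := by
          rw [norm_smul, Real.norm_eq_abs]
      _ ≤ ∑ k : Fin d, ‖∑ i, c (i + k) • f i‖ := hle
      _ = ∑ k : Fin d, ‖∑ i, c i • f i‖ := Finset.sum_congr rfl fun k _ => heach k
      _ = d * ‖∑ i, c i • f i‖ := by
          rw [Finset.sum_const, Finset.card_univ, Fintype.card_fin, nsmul_eq_mul]
  -- key ℓ₁ lower bound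
  have hl1 : ∀ c : Fin d → ℝ,
      (∑ i, |c i|) * ‖∑ i, f i‖ ≤ d * ‖∑ i, c i • f i‖ := by
    intro c
    have := havg (fun i => |c i|)
    rw [← habs c, abs_of_nonneg (Finset.sum_nonneg fun i _ => abs_nonneg _)] at this
    exact this
  -- ∑ f i ≠ 0
  have hfs : 0 < ‖∑ i, f i‖ := by
    rw [norm_pos_iff]
    intro h
    have h' : ∑ i, (1:ℝ) • f i = 0 := by simpa using h
    have := Fintype.linearIndependent_iff.mp f.linearIndependent (fun _ => 1) h' i0
    norm_num at this
  -- the isomorphism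
  let T : L ≃L[ℝ] PiLp 1 (fun _ : Fin d => ℝ) :=
    (f.equivFun.trans (WithLp.linearEquiv 1 ℝ (Fin d → ℝ)).symm).toContinuousLinearEquiv
  have hTapp : ∀ x : L, ∀ i, (T x) i = f.repr x i := fun x i => rfl
  have hTsymm_app : ∀ c : PiLp 1 (fun _ : Fin d => ℝ),
      T.symm c = ∑ i, c i • f i := by
    intro c
    show f.equivFun.symm _ = _
    rw [Module.Basis.equivFun_symm_apply]
    rfl
  have hnorm_pilp : ∀ c : PiLp 1 (fun _ : Fin d => ℝ), ‖c‖ = ∑ i, |c i| := by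
    intro c
    rw [PiLp.norm_eq_sum (by norm_num : (0:ℝ) < (1 : ℝ≥0∞).toReal)]
    simp [Real.norm_eq_abs]
  -- bounds on the operator norms
  have hTs : ‖(T.symm : PiLp 1 (fun _ : Fin d => ℝ) →L[ℝ] L)‖ ≤ ‖f i0‖ := by
    apply ContinuousLinearMap.opNorm_le_bound _ (norm_nonneg _)
    intro c
    show ‖T.symm c‖ ≤ _
    rw [hTsymm_app c, hnorm_pilp c]
    calc ‖∑ i, c i • f i‖ ≤ ∑ i, ‖c i • f i‖ := norm_sum_le _ _
      _ = ∑ i, |c i| * ‖f i0‖ := by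
          apply Finset.sum_congr rfl
          intro i _
          rw [norm_smul, Real.norm_eq_abs, hnorm i]
      _ = ‖f i0‖ * ∑ i, |c i| := by rw [← Finset.sum_mul, mul_comm]
  have hT : ‖(T : L →L[ℝ] PiLp 1 (fun _ : Fin d => ℝ))‖ ≤ d / ‖∑ i, f i‖ := by
    apply ContinuousLinearMap.opNorm_le_bound _ (div_nonneg (by positivity) hfs.le)
    intro x
    show ‖T x‖ ≤ _
    rw [hnorm_pilp (T x)]
    have hx : ∑ i, f.repr x i • f i = x := f.sum_repr x
    have := hl1 (fun i => f.repr x i)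
    rw [hx] at this
    have habs' : ∑ i, |(T x) i| = ∑ i, |f.repr x i| := rfl
    rw [habs']
    rw [div_mul_eq_mul_div, le_div_iff₀ hfs]
    linarith [this]
  -- conclude
  have hreal : ‖(T : L →L[ℝ] PiLp 1 (fun _ : Fin d => ℝ))‖ *
      ‖(T.symm : PiLp 1 (fun _ : Fin d => ℝ) →L[ℝ] L)‖ ≤
      (d : ℝ) * ‖f i0‖ / ‖∑ i, f i‖ := by
    refine le_trans (mul_le_mul hT hTs (norm_nonneg _)
      (div_nonneg (by positivity) hfs.le)) (le_of_eq (by ring))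
  refine le_trans (iInf_le _ T) ?_
  rw [← ENNReal.ofReal_coe_nnreal, ← ENNReal.ofReal_coe_nnreal, coe_nnnorm, coe_nnnorm,
    ← ENNReal.ofReal_mul (norm_nonneg _)]
  exact ENNReal.ofReal_le_ofReal hreal
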